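/- Let s_h, s_l, s_z be independent vectors in {0,1}^n with i.i.d. Bernoulli(p_h), Bernoulli(p_l), Bernoulli(p_z) coordinates, p_h > p_l > 1/2, p_z > 1/2. For any ε > 0, if n ≥ 2 ln(1/ε) / ((p_h - p_l)²(2p_z - 1)²), then Pr(d(s_h, s_z) ≥ d(s_l, s_z)) ≤ ε. -/

import Mathlib

noncomputable def wt (p : ℝ) (b : Bool) : ℝ := if b then p else 1 - p

noncomputable def wtv {n : ℕ} (p : ℝ) (x : Fin n → Bool) : ℝ := ∏ i, wt p (x i)

open Real in
lemma stmt16_aux1 (x : ℝ) (hx : 0 ≤ x) :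
    (1-x)*Real.exp x + (1+x)*Real.exp (-x) ≤ 2 - x^2 := by
  set f : ℝ → ℝ := fun y => 2 - y^2 - ((1-y)*Real.exp y + (1+y)*Real.exp (-y)) with hf
  have hderiv : ∀ y : ℝ, HasDerivAt f (y * (Real.exp y + Real.exp (-y) - 2)) y := by
    intro y
    have h1 : HasDerivAt (fun y : ℝ => (1-y)*Real.exp y) (-y * Real.exp y) y := by
      have := ((hasDerivAt_id y).const_sub 1).mul (Real.hasDerivAt_exp y)
      refine this.congr_deriv ?_; simp [id_eq]; try ring
    have h2 : HasDerivAt (fun y : ℝ => (1+y)*Real.exp (-y)) (-y * Real.exp (-y)) y := by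
      have hexp : HasDerivAt (fun y : ℝ => Real.exp (-y)) (-Real.exp (-y)) y := by
        have := (Real.hasDerivAt_exp (-y)).comp y ((hasDerivAt_id y).neg)
        refine this.congr_deriv ?_; simp [id_eq]; try ring
      have := ((hasDerivAt_id y).const_add 1).mul hexp
      refine this.congr_deriv ?_; simp [id_eq]; try ring
    have h3 : HasDerivAt (fun y : ℝ => 2 - y^2) (-(2*y)) y := by
      have := (hasDerivAt_pow 2 y).const_sub 2
      refine this.congr_deriv ?_; push_cast; ring
    have := h3.sub (h1.add h2)
    refine this.congr_deriv ?_; ring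
  have hmono : MonotoneOn f (Set.Ici 0) := by
    apply monotoneOn_of_deriv_nonneg (convex_Ici 0)
    · exact (Continuous.continuousOn (by continuity))
    · intro y hy
      exact (hderiv y).differentiableAt.differentiableWithinAt
    · intro y hy
      rw [(hderiv y).deriv]
      have hy0 : 0 < y := by simpa using hy
      have h2 : Real.exp y * Real.exp (-y) = 1 := by rw [← Real.exp_add]; simp
      nlinarith [sq_nonneg (Real.exp y - 1), Real.exp_pos y]
  have h0 : f 0 = 0 := by norm_num [hf]
  have := hmono (Set.self_mem_Ici) (by exact hx) hx
  rw [h0] at this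
  simp only [hf] at this
  linarith

/-- Sample complexity: if `n ≥ 2 ln(1/ε) / ((p_h - p_l)² (2 p_z - 1)²)` then the
probability that the follower is at least as close to the worse leader,
`Pr(d(s_h, s_z) ≥ d(s_l, s_z))`, is at most `ε`. -/
theorem stmt16 (n : ℕ) (ph pl pz ε : ℝ) (hl : 1/2 < pl) (hlh : pl < ph) (hph : ph ≤ 1)
    (hz : 1/2 < pz) (hpz : pz ≤ 1) (hε : 0 < ε)
    (hn : 2 * Real.log (1/ε) / ((ph - pl)^2 * (2*pz - 1)^2) ≤ n) :
    ∑ x : Fin n → Bool, ∑ y : Fin n → Bool, ∑ z : Fin n → Bool,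
      wtv ph x * wtv pl y * wtv pz z *
        (if hammingDist y z ≤ hammingDist x z then (1:ℝ) else 0)
      ≤ ε := by
  set δ := (ph - pl) * (2*pz - 1) with hδ
  have hδ0 : 0 ≤ δ := by rw [hδ]; nlinarith
  have hδpos : 0 < δ := by rw [hδ]; nlinarith
  have hwt : ∀ (p : ℝ), 0 ≤ p → p ≤ 1 → ∀ b, 0 ≤ wt p b := by
    intro p h0 h1 b; cases b <;> simp [wt] <;> linarith
  have hwph := hwt ph (by linarith) hph
  have hwpl := hwt pl (by linarith) (by linarith)
  have hwpz := hwt pz (by linarith) hpz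
  -- the per-coordinate factor
  set F : Bool → Bool → Bool → ℝ := fun a b c => wt ph a * wt pl b * wt pz c *
      Real.exp (δ * ((if a ≠ c then (1:ℝ) else 0) - (if b ≠ c then (1:ℝ) else 0))) with hF
  have hFnn : ∀ a b c, 0 ≤ F a b c := by
    intro a b c
    exact mul_nonneg (mul_nonneg (mul_nonneg (hwph a) (hwpl b)) (hwpz c)) (Real.exp_pos _).le
  have hamToSum : ∀ (x z : Fin n → Bool),
      (hammingDist x z : ℝ) = ∑ i, if x i ≠ z i then (1:ℝ) else 0 := by
    intro x z
    rw [hammingDist, Finset.card_filter]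
    push_cast
    simp
  have sumprod : ∀ (G : Fin n → Bool → ℝ),
      ∑ f : Fin n → Bool, ∏ i, G i (f i) = ∏ i, ∑ b, G i b := by
    intro G; rw [Finset.prod_univ_sum, Fintype.piFinset_univ]
  -- Step A: termwise bound by the exponential
  have stepA : ∀ x y z : Fin n → Bool,
      wtv ph x * wtv pl y * wtv pz z *
        (if hammingDist y z ≤ hammingDist x z then (1:ℝ) else 0)
        ≤ ∏ i, F (x i) (y i) (z i) := by
    intro x y z
    have hprod : ∏ i, F (x i) (y i) (z i) =
        wtv ph x * wtv pl y * wtv pz z *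
          Real.exp (δ * ((hammingDist x z : ℝ) - (hammingDist y z : ℝ))) := by
      simp only [hF]
      rw [Finset.prod_mul_distrib, Finset.prod_mul_distrib, ← Real.exp_sum,
        ← Finset.mul_sum, Finset.sum_sub_distrib, ← hamToSum, ← hamToSum]
      simp [wtv, Finset.prod_mul_distrib]
    rw [hprod]
    have hw : 0 ≤ wtv ph x * wtv pl y * wtv pz z := by
      apply mul_nonneg (mul_nonneg _ _)
      · exact Finset.prod_nonneg fun i _ => hwpz (z i)
      · exact Finset.prod_nonneg fun i _ => hwph (x i)
      · exact Finset.prod_nonneg fun i _ => hwpl (y i)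
    split
    · next h =>
      have hcast : (hammingDist y z : ℝ) ≤ (hammingDist x z : ℝ) := by exact_mod_cast h
      have : (1:ℝ) ≤ Real.exp (δ * ((hammingDist x z : ℝ) - (hammingDist y z : ℝ))) :=
        Real.one_le_exp (mul_nonneg hδ0 (by linarith))
      nlinarith
    · next h =>
      rw [mul_zero]
      exact mul_nonneg hw (Real.exp_pos _).le
  -- Step C: single-coordinate bound
  have stepC : ∑ a : Bool, ∑ b : Bool, ∑ c : Bool, F a b c ≤ 1 - δ^2/2 := by
    have haux := stmt16_aux1 δ hδ0
    have hE2 : 2 ≤ Real.exp δ + Real.exp (-δ) := by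
      nlinarith [sq_nonneg (Real.exp δ - 1), Real.exp_pos δ,
        (by rw [← Real.exp_add]; simp : Real.exp δ * Real.exp (-δ) = 1)]
    have hp : ph*(1-pl)*(1-pz) + (1-ph)*pl*pz ≤ (1-δ)/2 := by rw [hδ]; nlinarith
    simp only [hF, Fintype.sum_bool, wt]
    norm_num
    have hid : ((1-δ)*Real.exp δ + (1+δ)*Real.exp (-δ))/2 -
        (ph * pl * pz + ph * pl * (1 - pz) +
          (ph * (1 - pl) * pz * Real.exp (-δ) + ph * (1 - pl) * (1 - pz) * Real.exp δ) +
        ((1 - ph) * pl * pz * Real.exp δ + (1 - ph) * pl * (1 - pz) * Real.exp (-δ) +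
          ((1 - ph) * (1 - pl) * pz + (1 - ph) * (1 - pl) * (1 - pz))))
        = ((1-δ)/2 - (ph*(1-pl)*(1-pz) + (1-ph)*pl*pz)) *
            (Real.exp δ + Real.exp (-δ) - 2) := by
      rw [hδ]; ring
    have hprod := mul_nonneg
      (by linarith : (0:ℝ) ≤ (1-δ)/2 - (ph*(1-pl)*(1-pz) + (1-ph)*pl*pz))
      (by linarith : (0:ℝ) ≤ Real.exp δ + Real.exp (-δ) - 2)
    linarith
  have hMnn : 0 ≤ ∑ a : Bool, ∑ b : Bool, ∑ c : Bool, F a b c :=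
    Finset.sum_nonneg fun a _ => Finset.sum_nonneg fun b _ =>
      Finset.sum_nonneg fun c _ => hFnn a b c
  -- chain everything together
  calc ∑ x : Fin n → Bool, ∑ y : Fin n → Bool, ∑ z : Fin n → Bool,
      wtv ph x * wtv pl y * wtv pz z *
        (if hammingDist y z ≤ hammingDist x z then (1:ℝ) else 0)
      ≤ ∑ x : Fin n → Bool, ∑ y : Fin n → Bool, ∑ z : Fin n → Bool,
          ∏ i, F (x i) (y i) (z i) := by
        refine Finset.sum_le_sum fun x _ => Finset.sum_le_sum fun y _ =>
          Finset.sum_le_sum fun z _ => stepA x y z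
    _ = (∑ a : Bool, ∑ b : Bool, ∑ c : Bool, F a b c)^n := by
        calc ∑ x : Fin n → Bool, ∑ y : Fin n → Bool, ∑ z : Fin n → Bool,
            ∏ i, F (x i) (y i) (z i)
            = ∑ x : Fin n → Bool, ∑ y : Fin n → Bool, ∏ i, ∑ c, F (x i) (y i) c := by
              refine Finset.sum_congr rfl fun x _ => Finset.sum_congr rfl fun y _ => ?_
              exact sumprod (fun i c => F (x i) (y i) c)
          _ = ∑ x : Fin n → Bool, ∏ i, ∑ b, ∑ c, F (x i) b c := by
              refine Finset.sum_congr rfl fun x _ => ?_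
              exact sumprod (fun i b => ∑ c, F (x i) b c)
          _ = ∏ _i : Fin n, ∑ a, ∑ b, ∑ c, F a b c :=
              sumprod (fun _i a => ∑ b, ∑ c, F a b c)
          _ = (∑ a : Bool, ∑ b : Bool, ∑ c : Bool, F a b c)^n := by
              rw [Finset.prod_const, Finset.card_univ, Fintype.card_fin]
    _ ≤ (Real.exp (-(δ^2/2)))^n := by
        apply pow_le_pow_left₀ hMnn
        calc ∑ a : Bool, ∑ b : Bool, ∑ c : Bool, F a b c ≤ 1 - δ^2/2 := stepC
          _ ≤ Real.exp (-(δ^2/2)) := by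
            have := Real.add_one_le_exp (-(δ^2/2))
            linarith
    _ = Real.exp ((n : ℝ) * (-(δ^2/2))) := by rw [← Real.exp_nat_mul]
    _ ≤ ε := by
        rw [← Real.exp_log hε]
        apply Real.exp_le_exp.2
        have hd2 : (0:ℝ) < (ph - pl)^2 * (2*pz - 1)^2 := by nlinarith
        rw [div_le_iff₀ hd2] at hn
        rw [Real.log_div one_ne_zero (ne_of_gt hε), Real.log_one] at hn
        have hδsq : δ^2 = (ph - pl)^2 * (2*pz - 1)^2 := by rw [hδ]; ring
        nlinarith
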